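/- Let m ≥ 3 and let V(k) = 2 sin²(π/m)(3 cos(2π/m)+5) / (3( k√(6 cos(2π/m)+10) − √(6 cos(2π/m)+10) + 4 )²) for integers k ≥ 2. For each n ≥ 2m let ℓ(n) be the unique integer with m·ℓ(n) ≤ n < m·(ℓ(n)+1). If a sequence (W_n) satisfies V(ℓ(n)+1) ≤ W_n ≤ V(ℓ(n)) for all n ≥ 2m, then n² W_n → (1/3) m² sin²(π/m) as n → ∞. -/

import Mathlib

open Real Filter

/-- Squeeze argument of Theorem 2: with `ℓ(n) = ⌊n/m⌋`, if `V(ℓ(n)+1) ≤ W n ≤ V(ℓ(n))`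
for all `n ≥ 2m`, then `n² W n → (1/3) m² sin²(π/m)`. -/
theorem squeeze_quantization_coefficient (m : ℕ) (hm : 3 ≤ m) (V : ℕ → ℝ)
    (hV : ∀ k : ℕ, 2 ≤ k → V k =
      2 * Real.sin (π / m) ^ 2 * (3 * Real.cos (2 * π / m) + 5) /
        (3 * ((k : ℝ) * Real.sqrt (6 * Real.cos (2 * π / m) + 10) -
          Real.sqrt (6 * Real.cos (2 * π / m) + 10) + 4) ^ 2))
    (W : ℕ → ℝ)
    (hW : ∀ n : ℕ, 2 * m ≤ n → V (n / m + 1) ≤ W n ∧ W n ≤ V (n / m)) :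
    Tendsto (fun n : ℕ => (n : ℝ) ^ 2 * W n) atTop
      (nhds ((1 / 3) * (m : ℝ) ^ 2 * Real.sin (π / m) ^ 2)) := by
  have hmpos : 0 < m := by omega
  have hmR : (0:ℝ) < m := by exact_mod_cast hmpos
  set x := Real.cos (2 * π / m) with hx
  have hx1 : -1 ≤ x := Real.neg_one_le_cos _
  set s := Real.sqrt (6 * x + 10) with hsdef
  have hs2 : s ^ 2 = 6 * x + 10 := Real.sq_sqrt (by linarith)
  have hspos : 0 < s := Real.sqrt_pos.mpr (by linarith)
  set C := 2 * Real.sin (π / m) ^ 2 * (3 * x + 5) with hC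
  set L := (1 / 3) * (m : ℝ) ^ 2 * Real.sin (π / m) ^ 2 with hL
  set a : ℕ → ℝ := fun n => ((n / m : ℕ) : ℝ) with hadef
  have hdm : ∀ n : ℕ, (m : ℝ) * a n + ((n % m : ℕ) : ℝ) = n := by
    intro n
    have h := Nat.div_add_mod n m
    simp only [hadef]
    exact_mod_cast congrArg (Nat.cast : ℕ → ℝ) h
  -- r n / (m n) → 0
  have hr : Tendsto (fun n : ℕ => ((n % m : ℕ) : ℝ) / ((m : ℝ) * n)) atTop (nhds 0) := by
    apply squeeze_zero' (Filter.Eventually.of_forall fun n => by positivity) ?_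
      tendsto_one_div_atTop_nhds_zero_nat
    filter_upwards [eventually_ge_atTop 1] with n hn
    have hnR : (0:ℝ) < n := by exact_mod_cast hn
    have h1 : ((n % m : ℕ) : ℝ) ≤ m := by exact_mod_cast (Nat.mod_lt n hmpos).le
    rw [div_le_div_iff₀ (by positivity) hnR]
    nlinarith
  have ha : Tendsto (fun n : ℕ => a n / n) atTop (nhds (1 / (m : ℝ))) := by
    have h0 : Tendsto (fun n : ℕ => 1 / (m : ℝ) - ((n % m : ℕ) : ℝ) / ((m : ℝ) * n)) atTop
        (nhds (1 / (m : ℝ) - 0)) := tendsto_const_nhds.sub hr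
    rw [sub_zero] at h0
    apply h0.congr'
    filter_upwards [eventually_ge_atTop 1] with n hn
    have hnR : (0:ℝ) < n := by exact_mod_cast hn
    have h := hdm n
    have han : a n = ((n : ℝ) - ((n % m : ℕ) : ℝ)) / m := by
      rw [eq_div_iff hmR.ne']; linarith
    rw [han]; field_simp
  have hLeq : L = C / 3 * ((m : ℝ) / s) ^ 2 := by
    have hCs : C = Real.sin (π / m) ^ 2 * s ^ 2 := by rw [hs2, hC]; ring
    rw [hL, hCs]
    field_simp
  have key : ∀ c : ℝ,
      Tendsto (fun n : ℕ => C / 3 * ((n : ℝ) / (a n * s + c)) ^ 2) atTop (nhds L) := by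
    intro c
    have h1 : Tendsto (fun n : ℕ => (a n * s + c) / n) atTop (nhds (s / m)) := by
      have h2 : Tendsto (fun n : ℕ => s * (a n / n) + c * (1 / n)) atTop
          (nhds (s * (1 / (m : ℝ)) + c * 0)) :=
        (ha.const_mul s).add (tendsto_one_div_atTop_nhds_zero_nat.const_mul c)
      have h3 : s * (1 / (m : ℝ)) + c * 0 = s / m := by ring
      rw [h3] at h2
      exact h2.congr fun n => by ring
    have hne : s / (m : ℝ) ≠ 0 := by positivity
    have h4 : Tendsto (fun n : ℕ => ((a n * s + c) / n)⁻¹) atTop (nhds ((s / (m : ℝ))⁻¹)) :=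
      h1.inv₀ hne
    have h5 : Tendsto (fun n : ℕ => (n : ℝ) / (a n * s + c)) atTop (nhds ((m : ℝ) / s)) := by
      rw [show ((m : ℝ) / s) = (s / (m : ℝ))⁻¹ by rw [inv_div]]
      exact h4.congr fun n => by rw [inv_div]
    have h6 := (h5.pow 2).const_mul (C / 3)
    rw [hLeq]
    exact h6
  have hlower : Tendsto (fun n : ℕ => (n : ℝ) ^ 2 * V (n / m + 1)) atTop (nhds L) := by
    refine (key 4).congr' ?_
    filter_upwards [eventually_ge_atTop (2 * m)] with n hn
    have hk : 2 ≤ n / m + 1 := by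
      have : 1 ≤ n / m := (Nat.le_div_iff_mul_le hmpos).mpr (by omega)
      omega
    rw [hV _ hk]
    simp only [hadef]
    push_cast
    have e1 : ((n / m : ℕ) : ℝ) * s + 4 ≠ 0 := by positivity
    have e2 : (((n / m : ℕ) : ℝ) + 1) * s - s + 4 ≠ 0 := by
      have h2 : (((n / m : ℕ) : ℝ) + 1) * s - s + 4 = ((n / m : ℕ) : ℝ) * s + 4 := by ring
      rw [h2]; positivity
    rw [show (((n / m : ℕ) : ℝ) + 1) * s - s + 4 = ((n / m : ℕ) : ℝ) * s + 4 by ring]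
    rw [div_pow, ← div_div]
    ring
  have hupper : Tendsto (fun n : ℕ => (n : ℝ) ^ 2 * V (n / m)) atTop (nhds L) := by
    refine (key (4 - s)).congr' ?_
    filter_upwards [eventually_ge_atTop (2 * m)] with n hn
    have hk : 2 ≤ n / m := (Nat.le_div_iff_mul_le hmpos).mpr (by omega)
    rw [hV _ hk]
    simp only [hadef]
    have h1 : (2:ℝ) ≤ ((n / m : ℕ) : ℝ) := by exact_mod_cast hk
    have e1 : ((n / m : ℕ) : ℝ) * s + (4 - s) ≠ 0 := by nlinarith
    have e2 : ((n / m : ℕ) : ℝ) * s - s + 4 ≠ 0 := by nlinarith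
    rw [show ((n / m : ℕ) : ℝ) * s - s + 4 = ((n / m : ℕ) : ℝ) * s + (4 - s) by ring]
    rw [div_pow, ← div_div]
    ring
  refine tendsto_of_tendsto_of_tendsto_of_le_of_le' hlower hupper ?_ ?_
  · filter_upwards [eventually_ge_atTop (2 * m)] with n hn
    exact mul_le_mul_of_nonneg_left (hW n hn).1 (by positivity)
  · filter_upwards [eventually_ge_atTop (2 * m)] with n hn
    exact mul_le_mul_of_nonneg_left (hW n hn).2 (by positivity)
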